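/- There exists a nonzero polynomial R^{(2)} ∈ F[A_1,…,A_{d+e−1}] of total degree less than e²(S₂(d+e−1,d−1) + S₂(d+e−1,d)) such that for every α ∈ F^{d+e−1} with R^{(2)}(α) ≠ 0: (a) the set C_α = {h = X^e + h_{e−1}X^{e−1} + ⋯ + h_1X ∈ F[X] : #h(α) ≤ d} has exactly S₂(d+e−1, d) elements; (b) every h ∈ C_α satisfies #h(α) = d; (c) the coordinates α_1, …, α_{d+e−1} are pairwise distinct. -/

import Mathlib

/-- Stirling numbers of the second kind. -/
def stirling2 : ℕ → ℕ → ℕ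
  | 0, 0 => 1
  | 0, _ + 1 => 0
  | _ + 1, 0 => 0
  | n + 1, m + 1 => (m + 1) * stirling2 n (m + 1) + stirling2 n m

open MvPolynomial Polynomial

namespace R2Aux
open Finset Function

variable {n : ℕ} {β γ : Type*} [DecidableEq β] [DecidableEq γ]

/-- first occurrence position of the value `f i`. -/
def fo (f : Fin n → β) (i : Fin n) : Fin n :=
  (univ.filter fun j => f j = f i).min' ⟨i, by simp⟩

lemma fo_apply (f : Fin n → β) (i : Fin n) : f (fo f i) = f i := by
  have h := (univ.filter fun j => f j = f i).min'_mem ⟨i, by simp⟩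
  simpa [fo] using h

lemma fo_le (f : Fin n → β) (i : Fin n) : fo f i ≤ i :=
  Finset.min'_le _ _ (by simp)

lemma fo_min {f : Fin n → β} {i j : Fin n} (h : f j = f i) : fo f i ≤ j :=
  Finset.min'_le _ _ (by simp [h])

lemma fo_congr {f : Fin n → β} {i j : Fin n} (h : f i = f j) : fo f i = fo f j := by
  unfold fo
  congr 1
  exact Finset.filter_congr (fun x _ => by rw [h])

lemma fo_idem (f : Fin n → β) (i : Fin n) : fo f (fo f i) = fo f i :=
  fo_congr (fo_apply f i)

lemma fo_eq_iff {f : Fin n → β} {i j : Fin n} : fo f i = fo f j ↔ f i = f j := by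
  constructor
  · intro h
    have h1 := fo_apply f i
    have h2 := fo_apply f j
    rw [← h1, ← h2, h]
  · exact fo_congr

lemma fo_ext {f : Fin n → β} {g : Fin n → γ}
    (h : ∀ a b, f a = f b ↔ g a = g b) : fo f = fo g := by
  funext i
  unfold fo
  congr 1
  exact Finset.filter_congr (fun x _ => by simp [h])

/-- canonical label of `i`: the number of first-occurrence positions strictly
before the first occurrence of `f i`. -/
def canon (f : Fin n → β) (i : Fin n) : ℕ :=
  (univ.filter fun j => fo f j = j ∧ j < fo f i).card

lemma canon_congr_fo {f : Fin n → β} {i j : Fin n} (h : fo f i = fo f j) :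
    canon f i = canon f j := by unfold canon; rw [h]

lemma canon_fo (f : Fin n → β) (i : Fin n) : canon f (fo f i) = canon f i :=
  canon_congr_fo (fo_idem f i)

lemma canon_ext {f : Fin n → β} {g : Fin n → γ}
    (h : ∀ a b, f a = f b ↔ g a = g b) : canon f = canon g := by
  funext i
  unfold canon
  rw [fo_ext h]

lemma canon_lt_canon {f : Fin n → β} {i j : Fin n} (h : fo f i < fo f j) :
    canon f i < canon f j := by
  apply Finset.card_lt_card
  constructor
  · intro x hx
    simp only [mem_filter, mem_univ, true_and] at hx ⊢
    exact ⟨hx.1, hx.2.trans h⟩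
  · intro hsub
    have : fo f i ∈ univ.filter fun j' => fo f j' = j' ∧ j' < fo f j := by
      simp [fo_idem, h]
    have := hsub this
    simp only [mem_filter, mem_univ, true_and] at this
    exact lt_irrefl _ this.2

lemma canon_inj {f : Fin n → β} {i j : Fin n} (h : canon f i = canon f j) :
    f i = f j := by
  rcases lt_trichotomy (fo f i) (fo f j) with hlt | heq | hgt
  · exact absurd h (ne_of_lt (canon_lt_canon hlt))
  · exact fo_eq_iff.1 heq
  · exact absurd h.symm (ne_of_lt (canon_lt_canon hgt))

lemma canon_eq_iff {f : Fin n → β} {i j : Fin n} :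
    canon f i = canon f j ↔ f i = f j :=
  ⟨canon_inj, fun h => canon_congr_fo (fo_congr h)⟩

/-- set of first-occurrence positions -/
def FOset (f : Fin n → β) : Finset (Fin n) := univ.filter fun j => fo f j = j

lemma card_FOset (f : Fin n → β) : (FOset f).card = (univ.image f).card := by
  apply Finset.card_bij (fun j _ => f j)
  · intro a ha; exact Finset.mem_image_of_mem f (mem_univ a)
  · intro a ha b hb hab
    simp only [FOset, mem_filter] at ha hb
    rw [← ha.2, ← hb.2]
    exact fo_congr hab
  · intro b hb
    rcases Finset.mem_image.1 hb with ⟨a, _, rfl⟩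
    exact ⟨fo f a, by simp [FOset, fo_idem], fo_apply f a⟩

lemma canon_lt (f : Fin n → β) (i : Fin n) : canon f i < (univ.image f).card := by
  rw [← card_FOset]
  apply Finset.card_lt_card
  constructor
  · intro x hx
    simp only [mem_filter, mem_univ, true_and, FOset] at hx ⊢
    exact hx.1
  · intro hsub
    have : fo f i ∈ FOset f := by simp [FOset, fo_idem]
    have := hsub this
    simp only [mem_filter, mem_univ, true_and] at this
    exact lt_irrefl _ this.2

lemma image_canon (f : Fin n → β) :
    univ.image (canon f) = Finset.range (univ.image f).card := by
  have hsub : univ.image (canon f) ⊆ Finset.range (univ.image f).card := by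
    intro x hx
    rcases Finset.mem_image.1 hx with ⟨i, _, rfl⟩
    exact Finset.mem_range.2 (canon_lt f i)
  have himg : univ.image (canon f) = (FOset f).image (canon f) := by
    apply Finset.Subset.antisymm
    · intro x hx
      rcases Finset.mem_image.1 hx with ⟨i, _, rfl⟩
      rw [← canon_fo f i]
      exact Finset.mem_image_of_mem _ (by simp [FOset, fo_idem])
    · exact Finset.image_subset_image (Finset.subset_univ _)
  have hcard : (univ.image (canon f)).card = (univ.image f).card := by
    rw [himg, Finset.card_image_of_injOn, card_FOset]
    intro a ha b hb hab
    simp only [FOset, Finset.coe_filter, Set.mem_setOf_eq] at ha hb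
    rw [← ha.2, ← hb.2]
    exact fo_congr (canon_inj hab)
  exact Finset.eq_of_subset_of_card_le hsub (by rw [hcard, Finset.card_range])

lemma canon_surj (f : Fin n → β) {m : ℕ} (hm : m < (univ.image f).card) :
    ∃ i, canon f i = m := by
  have : m ∈ univ.image (canon f) := by rw [image_canon]; exact Finset.mem_range.2 hm
  rcases Finset.mem_image.1 this with ⟨i, _, hi⟩
  exact ⟨i, hi⟩


/-! ### init/snoc compatibility -/

lemma fo_castSucc (f : Fin (n + 1) → β) (i : Fin n) :
    fo f i.castSucc = (fo (Fin.init f) i).castSucc := by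
  apply le_antisymm
  · apply fo_min
    show f (Fin.castSucc _) = _
    have : Fin.init f (fo (Fin.init f) i) = Fin.init f i := fo_apply (Fin.init f) i
    exact this
  · have hle : fo f i.castSucc ≤ i.castSucc := fo_le f i.castSucc
    have hne : fo f i.castSucc ≠ Fin.last n := by
      intro h
      exact absurd (h ▸ hle) (not_le.2 (Fin.castSucc_lt_last i))
    obtain ⟨j₀, hj₀⟩ := Fin.exists_castSucc_eq.mpr hne
    have : Fin.init f j₀ = Fin.init f i := by
      show f j₀.castSucc = f i.castSucc
      rw [hj₀]
      exact fo_apply f i.castSucc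
    have := fo_min this
    rw [← hj₀]
    exact Fin.castSucc_le_castSucc_iff.2 this

lemma card_filter_castSucc (p : Fin (n + 1) → Prop) [DecidablePred p]
    (hl : ¬ p (Fin.last n)) :
    (univ.filter p).card = (univ.filter fun j : Fin n => p j.castSucc).card := by
  symm
  apply Finset.card_bij (fun j _ => Fin.castSucc j)
  · intro a ha
    simp only [mem_filter, mem_univ, true_and] at ha ⊢
    exact ha
  · intro a _ b _ hab
    exact Fin.castSucc_inj.1 hab
  · intro x hx
    simp only [mem_filter, mem_univ, true_and] at hx
    have hne : x ≠ Fin.last n := fun h => hl (h ▸ hx)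
    obtain ⟨j, hj⟩ := Fin.exists_castSucc_eq.mpr hne
    exact ⟨j, by simp only [mem_filter, mem_univ, true_and]; rw [hj]; exact hx, hj⟩

lemma canon_castSucc (f : Fin (n + 1) → β) (i : Fin n) :
    canon f i.castSucc = canon (Fin.init f) i := by
  unfold canon
  rw [fo_castSucc]
  rw [card_filter_castSucc (fun j => fo f j = j ∧ j < (fo (Fin.init f) i).castSucc)
    (by rintro ⟨-, h⟩; exact absurd h (not_lt.2 (Fin.le_last _)))]
  apply Finset.card_nbij id
  · intro a ha
    simp only [Finset.coe_filter, Set.mem_setOf_eq, mem_filter, mem_univ, true_and, id] at ha ⊢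
    refine ⟨?_, ?_⟩
    · have := ha.1
      rw [fo_castSucc] at this
      exact Fin.castSucc_inj.1 this
    · exact Fin.castSucc_lt_castSucc_iff.1 ha.2
  · exact fun a _ b _ h => h
  · intro x hx
    simp only [Finset.coe_filter, Set.mem_setOf_eq, mem_univ, true_and] at hx
    refine ⟨x, ?_, rfl⟩
    simp only [Finset.coe_filter, Set.mem_setOf_eq, mem_univ, true_and]
    rw [fo_castSucc, Fin.castSucc_inj, Fin.castSucc_lt_castSucc_iff]
    exact hx

/-! ### counting RGS functions -/

def RGSset (n k : ℕ) : Finset (Fin n → Fin k) :=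
  univ.filter fun f => Function.Surjective f ∧ ∀ i, (f i : ℕ) = canon f i

lemma mem_RGSset {k : ℕ} {f : Fin n → Fin k} :
    f ∈ RGSset n k ↔ Function.Surjective f ∧ ∀ i, (f i : ℕ) = canon f i := by
  simp [RGSset]

lemma card_image_of_surj {k : ℕ} {f : Fin n → Fin k} (h : Function.Surjective f) :
    (univ.image f).card = k := by
  have : univ.image f = univ := Finset.eq_univ_of_forall fun b => by
    obtain ⟨a, ha⟩ := h b
    exact Finset.mem_image.2 ⟨a, mem_univ a, ha⟩
  rw [this, card_univ, Fintype.card_fin]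

lemma canon_init_of {k : ℕ} (f : Fin (n + 1) → Fin k)
    (hcan : ∀ i, (f i : ℕ) = canon f i) (i : Fin n) :
    ((Fin.init f i : Fin k) : ℕ) = canon (Fin.init f) i := by
  have : (Fin.init f i : Fin k) = f i.castSucc := rfl
  rw [this, hcan i.castSucc, canon_castSucc]

lemma B2_facts {m : ℕ} (f : Fin (n + 1) → Fin (m + 1)) (hsur : Function.Surjective f)
    (hcan : ∀ i, (f i : ℕ) = canon f i)
    (hfresh : ∀ j : Fin n, Fin.init f j ≠ f (Fin.last n)) :
    (univ.image (Fin.init f)).card = m ∧ ((f (Fin.last n)) : ℕ) = m := by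
  have hK_le : (univ.image (Fin.init f)).card ≤ m := by
    have hsub : univ.image (Fin.init f) ⊆ (univ : Finset (Fin (m+1))).erase (f (Fin.last n)) := by
      intro v hv
      obtain ⟨j, _, rfl⟩ := Finset.mem_image.1 hv
      exact Finset.mem_erase.2 ⟨hfresh j, mem_univ _⟩
    calc (univ.image (Fin.init f)).card ≤ _ := Finset.card_le_card hsub
    _ = m := by rw [Finset.card_erase_of_mem (mem_univ _), card_univ, Fintype.card_fin]; omega
  have hK_ge : m ≤ (univ.image (Fin.init f)).card := by
    have hsub : univ.image f ⊆ insert (f (Fin.last n)) (univ.image (Fin.init f)) := by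
      intro v hv
      obtain ⟨j, _, rfl⟩ := Finset.mem_image.1 hv
      by_cases hjl : j = Fin.last n
      · subst hjl; exact Finset.mem_insert_self _ _
      · obtain ⟨i, hi⟩ := Fin.exists_castSucc_eq.mpr hjl
        apply Finset.mem_insert_of_mem
        exact Finset.mem_image.2 ⟨i, mem_univ _, by show f i.castSucc = f j; rw [hi]⟩
    have := Finset.card_le_card hsub
    rw [card_image_of_surj hsur] at this
    have h2 := Finset.card_insert_le (f (Fin.last n)) (univ.image (Fin.init f))
    omega
  have hK : (univ.image (Fin.init f)).card = m := le_antisymm hK_le hK_ge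
  refine ⟨hK, ?_⟩
  have hfo : fo f (Fin.last n) = Fin.last n := by
    by_contra hne
    obtain ⟨j₀, hj₀⟩ := Fin.exists_castSucc_eq.mpr hne
    apply hfresh j₀
    show f j₀.castSucc = f (Fin.last n)
    rw [hj₀]
    exact fo_apply f (Fin.last n)
  rw [hcan]
  show canon f (Fin.last n) = m
  unfold canon
  rw [hfo]
  rw [card_filter_castSucc (fun j => fo f j = j ∧ j < Fin.last n)
    (by rintro ⟨-, h⟩; exact lt_irrefl _ h)]
  have : (univ.filter fun j : Fin n => fo f j.castSucc = j.castSucc ∧ j.castSucc < Fin.last n)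
      = FOset (Fin.init f) := by
    apply Finset.filter_congr
    intro x _
    simp only [fo_castSucc, Fin.castSucc_inj, Fin.castSucc_lt_last, and_true]
  rw [this, card_FOset, hK]

lemma B2_mem_aux {m : ℕ} (f : Fin (n + 1) → Fin (m + 1)) (hsur : Function.Surjective f)
    (hcan : ∀ i, (f i : ℕ) = canon f i)
    (hfresh : ∀ j : Fin n, Fin.init f j ≠ f (Fin.last n))
    (g : Fin n → Fin m) (hgval : ∀ i, (g i : ℕ) = (f i.castSucc : ℕ)) :
    g ∈ RGSset n m := by
  have hB2 := B2_facts f hsur hcan hfresh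
  have hfib : ∀ a b, g a = g b ↔ Fin.init f a = Fin.init f b := by
    intro a b
    rw [Fin.ext_iff, Fin.ext_iff, hgval, hgval]
    exact Iff.rfl
  have hcg : canon g = canon (Fin.init f) := canon_ext hfib
  rw [mem_RGSset]
  constructor
  · intro v
    have hv : (v : ℕ) < (univ.image (Fin.init f)).card := by
      rw [hB2.1]; exact v.2
    obtain ⟨i, hi⟩ := canon_surj _ hv
    refine ⟨i, Fin.ext ?_⟩
    rw [hgval]
    show ((Fin.init f i : Fin (m+1)) : ℕ) = (v : ℕ)
    rw [canon_init_of f hcan i, hi]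
  · intro i
    rw [hgval, hcg]
    show ((Fin.init f i : Fin (m+1)) : ℕ) = canon (Fin.init f) i
    exact canon_init_of f hcan i

lemma B2_bound {m : ℕ} (f : Fin (n + 1) → Fin (m + 1))
    (hf : f ∈ (RGSset (n+1) (m+1)).filter fun f => ¬ ∃ j : Fin n, Fin.init f j = f (Fin.last n))
    (i : Fin n) : (f i.castSucc : ℕ) < m := by
  rw [Finset.mem_filter, mem_RGSset, not_exists] at hf
  have hB2 := B2_facts f hf.1.1 hf.1.2 hf.2
  have h3 : (f i.castSucc : ℕ) = canon (Fin.init f) i := canon_init_of f hf.1.2 i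
  rw [h3]
  exact lt_of_lt_of_eq (canon_lt _ i) hB2.1

theorem card_RGSset : ∀ n k : ℕ, (RGSset n k).card = stirling2 n k := by
  intro n
  induction n with
  | zero =>
    intro k
    cases k with
    | zero =>
      rw [show stirling2 0 0 = 1 from rfl]
      have : RGSset 0 0 = univ := Finset.eq_univ_of_forall fun f => mem_RGSset.2
        ⟨fun b => b.elim0, fun i => i.elim0⟩
      rw [this, card_univ]
      simp
    | succ k =>
      rw [show stirling2 0 (k+1) = 0 from rfl, Finset.card_eq_zero,
        Finset.eq_empty_iff_forall_notMem]
      intro f hf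
      obtain ⟨i, -⟩ := (mem_RGSset.1 hf).1 ⟨0, Nat.succ_pos k⟩
      exact i.elim0
  | succ n IH =>
    intro k
    cases k with
    | zero =>
      rw [show stirling2 (n+1) 0 = 0 from rfl, Finset.card_eq_zero,
        Finset.eq_empty_iff_forall_notMem]
      intro f _
      exact (f 0).elim0
    | succ m =>
      rw [show stirling2 (n+1) (m+1) = (m+1) * stirling2 n (m+1) + stirling2 n m from rfl]
      rw [← Finset.card_filter_add_card_filter_not
        (s := RGSset (n+1) (m+1)) (p := fun f => ∃ j : Fin n, Fin.init f j = f (Fin.last n))]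
      congr 1
      · -- B1
        rw [← IH (m+1), Nat.mul_comm (m+1)]
        have : ((RGSset n (m+1)) ×ˢ (univ : Finset (Fin (m+1)))).card
            = (RGSset n (m+1)).card * (m+1) := by
          rw [Finset.card_product, card_univ, Fintype.card_fin]
        rw [← this]
        apply Finset.card_bij' (fun f _ => (Fin.init f, f (Fin.last n)))
          (fun p _ => Fin.snoc p.1 p.2)
        · -- maps to
          intro f hf
          rw [Finset.mem_filter] at hf
          obtain ⟨hf, j₀, hj₀⟩ := hf
          rw [mem_RGSset] at hf
          rw [Finset.mem_product]
          constructor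
          · rw [mem_RGSset]
            refine ⟨?_, canon_init_of f hf.2⟩
            intro v
            obtain ⟨j, hj⟩ := hf.1 v
            by_cases hjl : j = Fin.last n
            · subst hjl; exact ⟨j₀, hj₀.trans hj⟩
            · obtain ⟨i, hi⟩ := Fin.exists_castSucc_eq.mpr hjl
              exact ⟨i, by show f i.castSucc = v; rw [hi]; exact hj⟩
          · exact mem_univ _
        · -- maps back
          intro p hp
          rw [Finset.mem_product, mem_RGSset] at hp
          obtain ⟨⟨hsur, hcan⟩, -⟩ := hp
          obtain ⟨g, v⟩ := p
          dsimp only at hsur hcan ⊢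
          have hinit : Fin.init (Fin.snoc g v : Fin (n+1) → Fin (m+1)) = g := by
            funext i; simp
          have hcs : ∀ i : Fin n, (Fin.snoc g v : Fin (n+1) → Fin (m+1)) i.castSucc = g i := by
            intro i; simp
          have hlast : (Fin.snoc g v : Fin (n+1) → Fin (m+1)) (Fin.last n) = v := by simp
          rw [Finset.mem_filter, mem_RGSset]
          obtain ⟨j₀, hj₀⟩ := hsur v
          refine ⟨⟨?_, ?_⟩, ⟨j₀, by rw [hinit, hj₀, hlast]⟩⟩
          · intro w
            obtain ⟨j, hj⟩ := hsur w
            exact ⟨j.castSucc, by rw [hcs, hj]⟩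
          · intro i
            by_cases hil : i = Fin.last n
            · subst hil
              have h1 : (Fin.snoc g v : Fin (n+1) → Fin (m+1)) (Fin.last n)
                  = (Fin.snoc g v : Fin (n+1) → Fin (m+1)) j₀.castSucc := by
                rw [hlast, hcs, hj₀]
              rw [canon_congr_fo (fo_congr h1), canon_castSucc, hinit, hlast, ← hj₀]
              exact hcan j₀
            · obtain ⟨i', hi'⟩ := Fin.exists_castSucc_eq.mpr hil
              subst hi'
              rw [canon_castSucc, hinit, hcs]
              exact hcan i'
        · intro f _; exact Fin.snoc_init_self f
        · intro p _
          obtain ⟨g, v⟩ := p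
          simp [Fin.init_snoc, Fin.snoc_last]
      · -- B2
        rw [← IH m]
        refine Finset.card_bij'
          (fun f hf => (fun i : Fin n => (⟨(f i.castSucc : ℕ), B2_bound f hf i⟩ : Fin m)))
          (fun g _ => Fin.snoc (fun i => (g i).castSucc) (Fin.last m)) ?_ ?_ ?_ ?_
        · -- hi : image in RGSset n m
          intro f hf
          have hf' := hf
          rw [Finset.mem_filter, mem_RGSset, not_exists] at hf'
          exact B2_mem_aux f hf'.1.1 hf'.1.2 hf'.2 _ (fun i => rfl)
        · -- hj : snoc in B2
          intro g hg
          rw [mem_RGSset] at hg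
          obtain ⟨hsur, hcan⟩ := hg
          set f : Fin (n+1) → Fin (m+1) := Fin.snoc (fun i => (g i).castSucc) (Fin.last m) with hfdef
          have hcs : ∀ i : Fin n, f i.castSucc = (g i).castSucc := by intro i; simp [hfdef]
          have hlast : f (Fin.last n) = Fin.last m := by simp [hfdef]
          have hinit : Fin.init f = fun i => (g i).castSucc := by
            funext i; simp [hfdef, Fin.init]
          have hfresh : ∀ j : Fin n, Fin.init f j ≠ f (Fin.last n) := by
            intro j h
            rw [hinit, hlast] at h
            exact absurd h (Fin.castSucc_lt_last (g j)).ne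
          have hfibinit : ∀ a b, Fin.init f a = Fin.init f b ↔ g a = g b := by
            intro a b
            rw [hinit]
            show (g a).castSucc = (g b).castSucc ↔ _
            exact Fin.castSucc_inj
          have hcaninit : canon (Fin.init f) = canon g := canon_ext hfibinit
          rw [Finset.mem_filter, mem_RGSset]
          have hsurf : Function.Surjective f := by
            intro v
            by_cases hvl : v = Fin.last m
            · subst hvl; exact ⟨Fin.last n, hlast⟩
            · obtain ⟨v', hv'⟩ := Fin.exists_castSucc_eq.mpr hvl
              obtain ⟨a, ha⟩ := hsur v'
              exact ⟨a.castSucc, by rw [hcs, ha, hv']⟩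
          have hfof : fo f (Fin.last n) = Fin.last n := by
            by_contra hne
            obtain ⟨j₀, hj₀⟩ := Fin.exists_castSucc_eq.mpr hne
            apply hfresh j₀
            show f j₀.castSucc = f (Fin.last n)
            rw [hj₀]
            exact fo_apply f (Fin.last n)
          refine ⟨⟨hsurf, ?_⟩, by rw [not_exists]; exact hfresh⟩
          intro i
          by_cases hil : i = Fin.last n
          · subst hil
            rw [hlast]
            show (m : ℕ) = canon f (Fin.last n)
            unfold canon
            rw [hfof]
            rw [card_filter_castSucc (fun j => fo f j = j ∧ j < Fin.last n)
              (by rintro ⟨-, h⟩; exact lt_irrefl _ h)]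
            have heq : (univ.filter fun j : Fin n => fo f j.castSucc = j.castSucc ∧ j.castSucc < Fin.last n)
                = FOset (Fin.init f) := by
              apply Finset.filter_congr
              intro x _
              simp only [fo_castSucc, Fin.castSucc_inj, Fin.castSucc_lt_last, and_true]
            rw [heq, card_FOset]
            have h5 : (univ.image (Fin.init f)).card = (univ.image g).card := by
              rw [hinit]
              have : (univ.image fun i => (g i).castSucc) = (univ.image g).image Fin.castSucc := by
                rw [Finset.image_image]
                rfl
              rw [this, Finset.card_image_of_injective _ (Fin.castSucc_injective m)]
            rw [h5, card_image_of_surj hsur]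
          · obtain ⟨i', hi'⟩ := Fin.exists_castSucc_eq.mpr hil
            subst hi'
            rw [hcs, canon_castSucc, hcaninit]
            show ((g i' : Fin m) : ℕ) = canon g i'
            exact hcan i'
        · -- left inverse
          intro f hf
          dsimp only
          have hf2 := hf
          rw [Finset.mem_filter, mem_RGSset, not_exists] at hf2
          have hB2 := B2_facts f hf2.1.1 hf2.1.2 hf2.2
          funext x
          by_cases hxl : x = Fin.last n
          · subst hxl
            rw [Fin.snoc_last]
            exact (Fin.ext hB2.2.symm : Fin.last m = f (Fin.last n))
          · obtain ⟨x', hx'⟩ := Fin.exists_castSucc_eq.mpr hxl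
            subst hx'
            rw [Fin.snoc_castSucc]
            exact Fin.ext rfl
        · -- right inverse
          intro g hg
          funext i
          apply Fin.ext
          show ((Fin.snoc (α := fun _ => Fin (m+1)) (fun i => (g i).castSucc) (Fin.last m)) i.castSucc : ℕ) = (g i : ℕ)
          rw [Fin.snoc_castSucc]
          rfl


/-! ### refinement lemma -/

lemma refine_exists (t : ℕ) : ∀ (v : Fin n → ℕ) (m : ℕ),
    (univ.image v).card + t = m → m ≤ n →
    ∃ w : Fin n → ℕ, (univ.image w).card = m ∧ ∀ i j, w i = w j → v i = v j := by
  induction t with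
  | zero =>
    intro v m hm _
    exact ⟨v, by omega, fun i j h => by rw [h]⟩
  | succ t IH =>
    intro v m hm hmn
    have hKn : (univ.image v).card < n := by
      have hle : (univ.image v).card ≤ n := by
        calc (univ.image v).card ≤ (univ : Finset (Fin n)).card := Finset.card_image_le
        _ = n := by rw [card_univ, Fintype.card_fin]
      rcases lt_or_eq_of_le hle with h | h
      · exact h
      · omega
    have hninj : ¬ Function.Injective v := by
      intro hinj
      rw [Finset.card_image_of_injective _ hinj, card_univ, Fintype.card_fin] at hKn
      exact lt_irrefl _ hKn
    obtain ⟨i, j, hvij, hij⟩ := Function.not_injective_iff.1 hninj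
    obtain ⟨c, hc⟩ := Infinite.exists_notMem_finset (univ.image v)
    set v' := Function.update v i c with hv'
    have hupd_ne : ∀ a, a ≠ i → v' a = v a := fun a ha => Function.update_of_ne ha c v
    have hupd_eq : v' i = c := Function.update_self i c v
    have himage : univ.image v' = insert c (univ.image v) := by
      ext x
      constructor
      · intro hx
        obtain ⟨a, -, rfl⟩ := Finset.mem_image.1 hx
        by_cases hai : a = i
        · subst hai; rw [hupd_eq]; exact Finset.mem_insert_self _ _
        · rw [hupd_ne a hai]
          exact Finset.mem_insert_of_mem (Finset.mem_image_of_mem v (mem_univ a))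
      · intro hx
        rcases Finset.mem_insert.1 hx with rfl | hx
        · exact Finset.mem_image.2 ⟨i, mem_univ i, hupd_eq⟩
        · obtain ⟨a, -, rfl⟩ := Finset.mem_image.1 hx
          by_cases hai : a = i
          · subst hai
            refine Finset.mem_image.2 ⟨j, mem_univ j, ?_⟩
            rw [hupd_ne j (Ne.symm hij), hvij]
          · exact Finset.mem_image.2 ⟨a, mem_univ a, hupd_ne a hai⟩
    have hcard' : (univ.image v').card = (univ.image v).card + 1 := by
      rw [himage, Finset.card_insert_of_notMem hc]
    have hrefine : ∀ a b, v' a = v' b → v a = v b := by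
      intro a b hab
      by_cases hai : a = i <;> by_cases hbi : b = i
      · subst hai; subst hbi; rfl
      · exfalso
        subst hai
        rw [hupd_eq, hupd_ne b hbi] at hab
        exact hc (Finset.mem_image.2 ⟨b, mem_univ b, hab.symm⟩)
      · exfalso
        subst hbi
        rw [hupd_eq, hupd_ne a hai] at hab
        exact hc (Finset.mem_image.2 ⟨a, mem_univ a, hab⟩)
      · rw [hupd_ne a hai, hupd_ne b hbi] at hab
        exact hab
    obtain ⟨w, hw1, hw2⟩ := IH v' m (by omega) hmn
    exact ⟨w, hw1, fun a b h => hrefine a b (hw2 a b h)⟩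

/-! ### stirling2 arithmetic -/

lemma stirling2_succ_succ (n m : ℕ) :
    stirling2 (n+1) (m+1) = (m + 1) * stirling2 n (m + 1) + stirling2 n m := rfl

lemma stirling2_eq_zero : ∀ {n m : ℕ}, n < m → stirling2 n m = 0 := by
  intro n
  induction n with
  | zero => intro m hm; obtain ⟨m', rfl⟩ := Nat.exists_eq_succ_of_ne_zero (by omega : m ≠ 0); rfl
  | succ n IH =>
    intro m hm
    obtain ⟨m', rfl⟩ := Nat.exists_eq_succ_of_ne_zero (by omega : m ≠ 0)
    rw [stirling2_succ_succ, IH (by omega), IH (by omega)]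
    simp

lemma stirling2_self : ∀ n : ℕ, stirling2 n n = 1 := by
  intro n
  induction n with
  | zero => rfl
  | succ n IH =>
    rw [stirling2_succ_succ, IH, stirling2_eq_zero (by omega)]
    simp

lemma two_mul_stirling2_succ : ∀ n : ℕ, 2 * stirling2 (n+1) n = n * (n+1) := by
  intro n
  induction n with
  | zero => rfl
  | succ n IH =>
    rw [stirling2_succ_succ, stirling2_self]
    ring_nf
    ring_nf at IH
    omega

lemma stirling2_pos : ∀ (n m : ℕ), 1 ≤ m → m ≤ n → 0 < stirling2 n m := by
  intro n
  induction n with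
  | zero => intro m h1 h2; omega
  | succ n IH =>
    intro m h1 h2
    obtain ⟨m', rfl⟩ := Nat.exists_eq_succ_of_ne_zero (by omega : m ≠ 0)
    rw [stirling2_succ_succ]
    by_cases hm : m' = 0
    · subst hm
      by_cases hn : n = 0
      · subst hn; simp [show stirling2 0 0 = 1 from rfl]
      · simp only [Nat.zero_add, one_mul]
        have := IH 1 le_rfl (by omega)
        omega
    · by_cases hmn : m' + 1 ≤ n
      · have := IH (m'+1) (by omega) hmn
        positivity
      · have hm'n : m' = n := by omega
        subst hm'n
        rw [stirling2_self]
        omega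

lemma stirling2_ge_pow (d t : ℕ) (hd : 2 ≤ d) :
    2 ^ t * stirling2 (d+1) d ≤ stirling2 (d+1+t) d := by
  obtain ⟨d', rfl⟩ := Nat.exists_eq_succ_of_ne_zero (by omega : d ≠ 0)
  induction t with
  | zero => simp
  | succ t IH =>
    simp only [Nat.succ_eq_add_one] at IH ⊢
    have h1 : stirling2 (d'+1+1+t+1) (d'+1)
        = (d'+1) * stirling2 (d'+1+1+t) (d'+1) + stirling2 (d'+1+1+t) d' :=
      stirling2_succ_succ _ _
    have h2 : 2 * stirling2 (d'+1+1+t) (d'+1) ≤ stirling2 (d'+1+1+t+1) (d'+1) := by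
      rw [h1]
      have h3 : 2 ≤ d' + 1 := hd
      nlinarith [Nat.zero_le (stirling2 (d'+1+1+t) d')]
    calc 2^(t+1) * stirling2 (d'+1+1) (d'+1) = 2 * (2^t * stirling2 (d'+1+1) (d'+1)) := by ring
    _ ≤ 2 * stirling2 (d'+1+1+t) (d'+1) := by omega
    _ ≤ stirling2 (d'+1+1+t+1) (d'+1) := h2

lemma main_ineq (d' e' : ℕ) (hd : 1 ≤ d') (he : 1 ≤ e') :
    (d'+e'+1)*(d'+e') + stirling2 (d'+e'+1) (d'+1) * (e'*(e'+1))
      + stirling2 (d'+e'+1) d' * ((e'+1)*(e'+2))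
    < 2 * (e'+1)^2 * (stirling2 (d'+e'+1) d' + stirling2 (d'+e'+1) (d'+1)) := by
  set n := d' + e' + 1 with hn
  set S0 := stirling2 n d' with hS0
  set S1 := stirling2 n (d'+1) with hS1
  have hsplit : 2 * (e'+1)^2 * (S0 + S1)
      = S1 * (e'*(e'+1)) + S0 * ((e'+1)*(e'+2)) + (S1 * ((e'+1)*(e'+2)) + S0 * (e'*(e'+1))) := by
    ring
  rw [hsplit]
  have hS0pos : 1 ≤ S0 := stirling2_pos n d' hd (by omega)
  have hkey : n * (d'+e') ≤ S1 * ((e'+1)*(e'+2)) := by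
    have hS1val : 2 * stirling2 (d'+1+1) (d'+1) = (d'+1)*(d'+2) := by
      rw [two_mul_stirling2_succ]; try ring
    by_cases he1 : e' = 1
    · subst he1
      have hS1eq : 2 * S1 = (d'+1)*(d'+2) := by
        rw [hS1, show n = d'+1+1 by omega]
        try exact hS1val
      have hn2 : n = d'+2 := by omega
      rw [hn2]
      nlinarith [hS1eq]
    · have he2 : 2 ≤ e' := by omega
      have hge : 2 ^ (e'-1) * stirling2 (d'+1+1) (d'+1) ≤ stirling2 (d'+1+1+(e'-1)) (d'+1) :=
        stirling2_ge_pow (d'+1) (e'-1) (by omega)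
      have hidx : d'+1+1+(e'-1) = n := by omega
      rw [hidx] at hge
      have hpow : 2 ≤ 2 ^ (e'-1) := by
        calc 2 = 2^1 := rfl
        _ ≤ 2^(e'-1) := Nat.pow_le_pow_right (by omega) (by omega)
      have hS1ge : (d'+1)*(d'+2) ≤ S1 := by
        calc (d'+1)*(d'+2) = 2 * stirling2 (d'+1+1) (d'+1) := hS1val.symm
        _ ≤ 2^(e'-1) * stirling2 (d'+1+1) (d'+1) := Nat.mul_le_mul_right _ hpow
        _ ≤ S1 := hge
      have hnle : n ≤ (d'+1)*(e'+1) := by nlinarith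
      have hn1le : d' + e' ≤ (d'+1)*(e'+1) := by nlinarith
      calc n * (d'+e') ≤ ((d'+1)*(e'+1)) * ((d'+1)*(e'+1)) := Nat.mul_le_mul hnle hn1le
      _ = ((d'+1)*(d'+1)) * ((e'+1)*(e'+1)) := by ring
      _ ≤ ((d'+1)*(d'+2)) * ((e'+1)*(e'+2)) := by
          apply Nat.mul_le_mul <;> apply Nat.mul_le_mul <;> omega
      _ ≤ S1 * ((e'+1)*(e'+2)) := Nat.mul_le_mul_right _ hS1ge
  have he2' : 2 ≤ e' * (e'+1) := by nlinarith
  have hlast : 2 ≤ S0 * (e'*(e'+1)) := by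
    calc 2 ≤ e' * (e'+1) := he2'
    _ ≤ S0 * (e'*(e'+1)) := Nat.le_mul_of_pos_left _ hS0pos
  omega


/-! ### algebra part -/

section Algebra

open MvPolynomial

variable {F : Type*} [Field F] [DecidableEq F] {n : ℕ}

def NRset {k : ℕ} (f : Fin n → Fin k) : Finset (Fin n) := univ.filter fun i => fo f i ≠ i

lemma card_NRset {k : ℕ} {f : Fin n → Fin k} (h : Function.Surjective f) :
    (NRset f).card = n - k := by
  have h1 : (univ.filter fun i : Fin n => fo f i = i).card = k := by
    have h0 := card_FOset f
    rw [FOset] at h0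
    rw [h0, card_image_of_surj h]
  have h2 := Finset.card_filter_add_card_filter_not
    (s := (univ : Finset (Fin n))) (p := fun i => fo f i = i)
  rw [card_univ, Fintype.card_fin] at h2
  have h3 : NRset f = univ.filter fun i => ¬ (fo f i = i) := rfl
  rw [h3]
  omega

variable [NeZero n]

def nrEmb (M : ℕ) {k : ℕ} (f : Fin n → Fin k) : Fin M → Fin n :=
  if h : (NRset f).card = M then fun r => ((NRset f).orderIsoOfFin h r : Fin n)
  else fun _ => ⟨0, Nat.pos_of_ne_zero (NeZero.ne n)⟩

lemma nrEmb_mem {M k : ℕ} {f : Fin n → Fin k} (h : (NRset f).card = M) (r : Fin M) :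
    nrEmb M f r ∈ NRset f := by
  rw [nrEmb, dif_pos h]
  exact ((NRset f).orderIsoOfFin h r).2

lemma nrEmb_not_fo {M k : ℕ} {f : Fin n → Fin k} (h : (NRset f).card = M) (r : Fin M) :
    fo f (nrEmb M f r) ≠ nrEmb M f r := by
  have := nrEmb_mem h r
  rw [NRset, mem_filter] at this
  exact this.2

lemma nrEmb_inj {M k : ℕ} {f : Fin n → Fin k} (h : (NRset f).card = M) :
    Function.Injective (nrEmb M f) := by
  intro a b hab
  rw [nrEmb, dif_pos h] at hab
  exact (((NRset f).orderIsoOfFin h)).injective (Subtype.ext hab)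

lemma nrEmb_surj {M k : ℕ} {f : Fin n → Fin k} (h : (NRset f).card = M) {i : Fin n}
    (hi : fo f i ≠ i) : ∃ r, nrEmb M f r = i := by
  have hmem : i ∈ NRset f := by rw [NRset, mem_filter]; exact ⟨mem_univ i, hi⟩
  obtain ⟨r, hr⟩ := ((NRset f).orderIsoOfFin h).surjective ⟨i, hmem⟩
  exact ⟨r, by rw [nrEmb, dif_pos h, hr]⟩

noncomputable def genMat (F : Type*) [Field F] {n : ℕ} [NeZero n] (M : ℕ) {k : ℕ} (f : Fin n → Fin k) :
    Matrix (Fin M) (Fin M) (MvPolynomial (Fin n) F) :=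
  Matrix.of fun r c =>
    X (nrEmb M f r) ^ ((c : ℕ) + 1) - X (fo f (nrEmb M f r)) ^ ((c : ℕ) + 1)

lemma genMat_apply {M k : ℕ} (f : Fin n → Fin k) (r c : Fin M) :
    genMat F M f r c
      = X (nrEmb M f r) ^ ((c : ℕ) + 1) - X (fo f (nrEmb M f r)) ^ ((c : ℕ) + 1) := rfl

/-- determinant of the `x_i^(j+1)` power matrix is nonzero in the polynomial ring -/
lemma det_pow_matrix {M : ℕ} (x : Fin M → Fin n) (hx : Function.Injective x) :
    (Matrix.of fun r c : Fin M =>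
      (X (x r) : MvPolynomial (Fin n) F) ^ ((c : ℕ) + 1)).det ≠ 0 := by
  have hfactor : (Matrix.of fun r c : Fin M => (X (x r) : MvPolynomial (Fin n) F) ^ ((c : ℕ) + 1))
      = Matrix.diagonal (fun r => (X (x r) : MvPolynomial (Fin n) F))
        * Matrix.vandermonde (fun r => (X (x r) : MvPolynomial (Fin n) F)) := by
    apply Matrix.ext
    intro r c
    rw [Matrix.diagonal_mul]
    show (X (x r) : MvPolynomial (Fin n) F) ^ ((c : ℕ) + 1) = X (x r) * X (x r) ^ (c : ℕ)
    rw [pow_succ]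
    ring
  rw [hfactor, Matrix.det_mul, Matrix.det_diagonal, Matrix.det_vandermonde]
  apply mul_ne_zero
  · exact Finset.prod_ne_zero_iff.2 fun r _ => MvPolynomial.X_ne_zero _
  · apply Finset.prod_ne_zero_iff.2
    intro i _
    apply Finset.prod_ne_zero_iff.2
    intro j hj
    rw [Finset.mem_Ioi] at hj
    apply sub_ne_zero.2
    intro hXX
    exact (ne_of_gt hj) (hx (MvPolynomial.X_injective hXX))

lemma det_genMat_ne_zero {M k : ℕ} {f : Fin n → Fin k} (h : (NRset f).card = M) :
    (genMat F M f).det ≠ 0 := by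
  intro h0
  set φ : MvPolynomial (Fin n) F →+* MvPolynomial (Fin n) F :=
    (aeval (fun i : Fin n => if fo f i = i then 0 else X i)
      : MvPolynomial (Fin n) F →ₐ[F] MvPolynomial (Fin n) F).toRingHom with hφ
  have hmap : (genMat F M f).map φ
      = Matrix.of fun r c : Fin M => (X (nrEmb M f r) : MvPolynomial (Fin n) F) ^ ((c : ℕ) + 1) := by
    ext r c
    rw [Matrix.map_apply, genMat_apply]
    have h1 : φ (X (nrEmb M f r)) = X (nrEmb M f r) := by
      rw [hφ]
      simp only [AlgHom.toRingHom_eq_coe, RingHom.coe_coe, MvPolynomial.aeval_X]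
      rw [if_neg (nrEmb_not_fo h r)]
    have h2 : φ (X (fo f (nrEmb M f r))) = 0 := by
      rw [hφ]
      simp only [AlgHom.toRingHom_eq_coe, RingHom.coe_coe, MvPolynomial.aeval_X]
      rw [if_pos (fo_idem f _)]
    rw [map_sub, map_pow, map_pow, h1, h2, zero_pow (Nat.succ_ne_zero _), sub_zero]
    rfl
  have hdet := RingHom.map_det φ (genMat F M f)
  rw [RingHom.mapMatrix_apply, h0, map_zero, hmap] at hdet
  exact det_pow_matrix (fun r => nrEmb M f r) (nrEmb_inj h) hdet.symm

/-- total degree bound for determinants with column-wise degree bounds -/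
lemma totalDegree_det_le {M : ℕ} (A : Matrix (Fin M) (Fin M) (MvPolynomial (Fin n) F))
    (b : Fin M → ℕ) (hA : ∀ r c, (A r c).totalDegree ≤ b c) :
    A.det.totalDegree ≤ ∑ c, b c := by
  rw [Matrix.det_apply]
  apply le_trans (MvPolynomial.totalDegree_finset_sum _ _)
  apply Finset.sup_le
  intro σ _
  have h1 : (Equiv.Perm.sign σ • ∏ i, A (σ i) i).totalDegree
      ≤ (∏ i, A (σ i) i).totalDegree := by
    rcases Int.units_eq_one_or (Equiv.Perm.sign σ) with h | h <;> rw [h]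
    · rw [one_smul]
    · rw [Units.neg_smul, one_smul, totalDegree_neg]
  refine le_trans h1 (le_trans (MvPolynomial.totalDegree_finset_prod _ _) ?_)
  exact Finset.sum_le_sum fun i _ => hA (σ i) i

lemma totalDegree_genMat_det {M k : ℕ} (f : Fin n → Fin k) :
    (genMat F M f).det.totalDegree ≤ ∑ c : Fin M, ((c : ℕ) + 1) := by
  apply totalDegree_det_le
  intro r c
  rw [genMat_apply]
  apply le_trans (MvPolynomial.totalDegree_sub _ _)
  rw [MvPolynomial.totalDegree_X_pow, MvPolynomial.totalDegree_X_pow]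
  exact le_of_eq (max_self _)

/-- Vandermonde certificate polynomial -/
noncomputable def vdm (F : Type*) [Field F] (n : ℕ) : MvPolynomial (Fin n) F :=
  (Matrix.vandermonde fun i : Fin n => (X i : MvPolynomial (Fin n) F)).det

lemma vdm_ne_zero : vdm F n ≠ 0 := by
  rw [vdm, Matrix.det_vandermonde]
  apply Finset.prod_ne_zero_iff.2
  intro i _
  apply Finset.prod_ne_zero_iff.2
  intro j hj
  rw [Finset.mem_Ioi] at hj
  exact sub_ne_zero.2 fun hXX => (ne_of_gt hj) (MvPolynomial.X_injective hXX)

lemma totalDegree_vdm : (vdm F n).totalDegree ≤ ∑ c : Fin n, (c : ℕ) := by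
  apply totalDegree_det_le
  intro r c
  rw [Matrix.vandermonde]
  show ((X r : MvPolynomial (Fin n) F) ^ (c : ℕ)).totalDegree ≤ (c : ℕ)
  rw [MvPolynomial.totalDegree_X_pow]

lemma vdm_eval_injective (α : Fin n → F) (h : eval α (vdm F n) ≠ 0) :
    Function.Injective α := by
  intro i j hij
  by_contra hne
  apply h
  rw [vdm, RingHom.map_det, RingHom.mapMatrix_apply]
  have hM : (Matrix.vandermonde fun i : Fin n => (X i : MvPolynomial (Fin n) F)).map (eval α)
      = Matrix.vandermonde α := by
    ext r c
    rw [Matrix.map_apply]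
    show eval α ((X r : MvPolynomial (Fin n) F) ^ (c : ℕ)) = α r ^ (c : ℕ)
    rw [map_pow, MvPolynomial.eval_X]
  rw [hM]
  apply Matrix.det_zero_of_row_eq hne
  funext c
  show α i ^ (c : ℕ) = α j ^ (c : ℕ)
  rw [hij]

end Algebra

/-! ### univariate polynomial normal form -/

section Poly

open Polynomial

variable {F : Type*} [Field F] {e' : ℕ}

noncomputable def polyOf (e' : ℕ) (c : Fin e' → F) : Polynomial F :=
  Polynomial.X ^ (e' + 1) + ∑ k : Fin e', Polynomial.C (c k) * Polynomial.X ^ ((k : ℕ) + 1)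

lemma polyOf_eval (c : Fin e' → F) (t : F) :
    (polyOf e' c).eval t = t ^ (e' + 1) + ∑ k : Fin e', c k * t ^ ((k : ℕ) + 1) := by
  rw [polyOf]
  simp [eval_finset_sum]

lemma tail_degree_lt (c : Fin e' → F) :
    (∑ k : Fin e', Polynomial.C (c k) * Polynomial.X ^ ((k : ℕ) + 1)).degree < ((e' + 1 : ℕ) : WithBot ℕ) := by
  apply lt_of_le_of_lt (Polynomial.degree_sum_le _ _)
  rw [Finset.sup_lt_iff (by exact_mod_cast WithBot.bot_lt_coe _)]
  intro k _
  apply lt_of_le_of_lt (Polynomial.degree_C_mul_X_pow_le _ _)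
  have hk := k.isLt
  exact_mod_cast by omega

lemma polyOf_degree (c : Fin e' → F) : (polyOf e' c).degree = (e' + 1 : ℕ) := by
  have h1 : (∑ k : Fin e', Polynomial.C (c k) * Polynomial.X ^ ((k : ℕ) + 1)).degree
      < (Polynomial.X ^ (e'+1) : Polynomial F).degree := by
    rw [Polynomial.degree_X_pow]
    exact tail_degree_lt c
  rw [polyOf, Polynomial.degree_add_eq_left_of_degree_lt h1, Polynomial.degree_X_pow]

lemma polyOf_natDegree (c : Fin e' → F) : (polyOf e' c).natDegree = e' + 1 :=
  Polynomial.natDegree_eq_of_degree_eq_some (polyOf_degree c)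

lemma polyOf_monic (c : Fin e' → F) : (polyOf e' c).Monic := by
  rw [polyOf]
  exact Polynomial.monic_X_pow_add (by exact_mod_cast tail_degree_lt c)

lemma tail_coeff (c : Fin e' → F) (m : ℕ) :
    (∑ k : Fin e', Polynomial.C (c k) * Polynomial.X ^ ((k : ℕ) + 1)).coeff m
      = ∑ k : Fin e', (if m = (k : ℕ) + 1 then c k else 0) := by
  rw [Polynomial.finset_sum_coeff]
  apply Finset.sum_congr rfl
  intro k _
  rw [Polynomial.coeff_C_mul, Polynomial.coeff_X_pow, mul_ite, mul_one, mul_zero]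

lemma polyOf_coeff_zero (c : Fin e' → F) : (polyOf e' c).coeff 0 = 0 := by
  rw [polyOf, Polynomial.coeff_add, Polynomial.coeff_X_pow, tail_coeff]
  rw [if_neg (by omega : ¬ (0 : ℕ) = e' + 1),
    show (∑ k : Fin e', if (0 : ℕ) = (k : ℕ) + 1 then c k else 0) = 0 from
      Finset.sum_eq_zero (fun k _ => if_neg (by omega))]
  ring

lemma polyOf_coeff_succ (c : Fin e' → F) (k : Fin e') :
    (polyOf e' c).coeff ((k : ℕ) + 1) = c k := by
  have hk := k.isLt
  rw [polyOf, Polynomial.coeff_add, Polynomial.coeff_X_pow, tail_coeff]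
  rw [if_neg (by omega : ¬ (k : ℕ) + 1 = e' + 1)]
  rw [Finset.sum_eq_single k]
  · rw [if_pos rfl]; ring
  · intro b _ hb
    apply if_neg
    intro hbk
    exact hb (Fin.ext (by omega))
  · intro hk; exact absurd (mem_univ k) hk

lemma polyOf_coeff_top (c : Fin e' → F) : (polyOf e' c).coeff (e' + 1) = 1 := by
  rw [polyOf, Polynomial.coeff_add, Polynomial.coeff_X_pow, if_pos rfl,
    tail_coeff,
    show (∑ k : Fin e', if e' + 1 = (k : ℕ) + 1 then c k else 0) = 0 from
      Finset.sum_eq_zero (fun k _ => if_neg (by have := k.isLt; omega))]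
  ring

lemma poly_eq_polyOf {h : Polynomial F} (hm : h.Monic) (hdeg : h.natDegree = e' + 1)
    (h0 : h.coeff 0 = 0) : h = polyOf e' (fun k => h.coeff ((k : ℕ) + 1)) := by
  apply Polynomial.ext
  intro m
  rcases Nat.lt_or_ge m 1 with hm0 | hm1
  · interval_cases m
    rw [polyOf_coeff_zero, h0]
  · rcases Nat.lt_or_ge m (e' + 1) with hme | hme
    · have hmk : m = ((⟨m - 1, by omega⟩ : Fin e') : ℕ) + 1 := by
        simp only [Fin.val_mk]
        omega
      rw [hmk, polyOf_coeff_succ]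
    · rcases Nat.eq_or_lt_of_le hme with hme | hme
      · rw [← hme]
        have h1 : h.coeff (e' + 1) = 1 := by
          rw [show e' + 1 = h.natDegree by omega]
          exact hm.coeff_natDegree
        rw [h1, polyOf_coeff_top]
      · rw [Polynomial.coeff_eq_zero_of_natDegree_lt (by omega),
          Polynomial.coeff_eq_zero_of_natDegree_lt (by rw [polyOf_natDegree]; omega)]

end Poly


/-! ### solving the linear systems -/

section Solve

open MvPolynomial

variable {F : Type*} [Field F] [DecidableEq F] {n : ℕ} [NeZero n] {e' k : ℕ}

lemma evalMat_apply {M : ℕ} (f : Fin n → Fin k) (α : Fin n → F) (r c : Fin M) :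
    ((genMat F M f).map (MvPolynomial.eval α)) r c
      = α (nrEmb M f r) ^ ((c : ℕ) + 1) - α (fo f (nrEmb M f r)) ^ ((c : ℕ) + 1) := by
  rw [Matrix.map_apply, genMat_apply, map_sub, map_pow, map_pow, MvPolynomial.eval_X, MvPolynomial.eval_X]

lemma mulVec_row {M : ℕ} (f : Fin n → Fin k) (α : Fin n → F) (cv : Fin M → F) (r : Fin M) :
    ((genMat F M f).map (MvPolynomial.eval α)).mulVec cv r
      = (∑ c : Fin M, cv c * α (nrEmb M f r) ^ ((c : ℕ) + 1))
        - (∑ c : Fin M, cv c * α (fo f (nrEmb M f r)) ^ ((c : ℕ) + 1)) := by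
  simp only [Matrix.mulVec, dotProduct]
  rw [← Finset.sum_sub_distrib]
  apply Finset.sum_congr rfl
  intro c _
  rw [evalMat_apply]
  ring

lemma eqs_iff_mulVec (f : Fin n → Fin k) (h : (NRset f).card = e') (α : Fin n → F)
    (cv : Fin e' → F) :
    (∀ i, (polyOf e' cv).eval (α i) = (polyOf e' cv).eval (α (fo f i)))
      ↔ ((genMat F e' f).map (MvPolynomial.eval α)).mulVec cv
        = fun r => α (fo f (nrEmb e' f r)) ^ (e' + 1) - α (nrEmb e' f r) ^ (e' + 1) := by
  constructor
  · intro hp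
    funext r
    have h1 := hp (nrEmb e' f r)
    rw [polyOf_eval, polyOf_eval] at h1
    rw [mulVec_row]
    linear_combination h1
  · intro hmv i
    by_cases hfo : fo f i = i
    · rw [hfo]
    · obtain ⟨r, hr⟩ := nrEmb_surj h hfo
      have h1 := congrFun hmv r
      rw [mulVec_row, hr] at h1
      rw [polyOf_eval, polyOf_eval]
      linear_combination h1

lemma solve_exists_unique (f : Fin n → Fin k) (h : (NRset f).card = e') (α : Fin n → F)
    (hdet : ((genMat F e' f).map (MvPolynomial.eval α)).det ≠ 0) :
    ∃ cv : Fin e' → F, (∀ i, (polyOf e' cv).eval (α i) = (polyOf e' cv).eval (α (fo f i)))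
      ∧ ∀ cv' : Fin e' → F,
        (∀ i, (polyOf e' cv').eval (α i) = (polyOf e' cv').eval (α (fo f i))) → cv' = cv := by
  set A := (genMat F e' f).map (MvPolynomial.eval α) with hA
  set b : Fin e' → F :=
    fun r => α (fo f (nrEmb e' f r)) ^ (e' + 1) - α (nrEmb e' f r) ^ (e' + 1) with hb
  have hAu : IsUnit A.det := isUnit_iff_ne_zero.2 hdet
  refine ⟨A⁻¹.mulVec b, ?_, ?_⟩
  · rw [eqs_iff_mulVec f h α]
    rw [Matrix.mulVec_mulVec, Matrix.mul_nonsing_inv _ hAu, Matrix.one_mulVec]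
  · intro cv hcv
    rw [eqs_iff_mulVec f h α] at hcv
    calc cv = (1 : Matrix (Fin e') (Fin e') F).mulVec cv := (Matrix.one_mulVec cv).symm
    _ = (A⁻¹ * A).mulVec cv := by rw [Matrix.nonsing_inv_mul _ hAu]
    _ = A⁻¹.mulVec (A.mulVec cv) := (Matrix.mulVec_mulVec cv A⁻¹ A).symm
    _ = A⁻¹.mulVec b := by rw [hcv]

lemma no_solve (g : Fin n → Fin k) (h : (NRset g).card = e' + 1) (α : Fin n → F)
    (hdet : ((genMat F (e' + 1) g).map (MvPolynomial.eval α)).det ≠ 0) (cv : Fin e' → F)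
    (hc : ∀ i, (polyOf e' cv).eval (α i) = (polyOf e' cv).eval (α (fo g i))) : False := by
  set u : Fin (e' + 1) → F := Fin.snoc cv 1 with hu
  have hu0 : u ≠ 0 := by
    intro h0
    have := congrFun h0 (Fin.last e')
    rw [hu] at this
    simp only [Fin.snoc_last] at this
    exact one_ne_zero this
  have hmv : ((genMat F (e' + 1) g).map (MvPolynomial.eval α)).mulVec u = 0 := by
    funext r
    rw [mulVec_row]
    have hsplit : ∀ t : F, (∑ c : Fin (e' + 1), u c * t ^ ((c : ℕ) + 1))
        = (∑ c' : Fin e', cv c' * t ^ ((c' : ℕ) + 1)) + t ^ (e' + 1) := by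
      intro t
      rw [Fin.sum_univ_castSucc]
      congr 1
      · apply Finset.sum_congr rfl
        intro c' _
        rw [hu]
        simp only [Fin.snoc_castSucc, Fin.coe_castSucc]
      · rw [hu]
        simp only [Fin.snoc_last, Fin.val_last, one_mul]
    rw [hsplit, hsplit]
    have h1 := hc (nrEmb (e' + 1) g r)
    rw [polyOf_eval, polyOf_eval] at h1
    show _ = (0 : Fin (e'+1) → F) r
    simp only [Pi.zero_apply]
    linear_combination h1
  have := (Matrix.exists_mulVec_eq_zero_iff).1 ⟨u, hu0, hmv⟩
  exact hdet this

/-! ### fiber helpers -/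

lemma card_image_le_of_fo {β : Type*} [DecidableEq β] {f : Fin n → Fin k}
    (hs : Function.Surjective f) (v : Fin n → β) (hv : ∀ i, v i = v (fo f i)) :
    (univ.image v).card ≤ k := by
  have h1 : univ.image v = (univ.image (fo f)).image v := by
    apply Finset.Subset.antisymm
    · intro x hx
      obtain ⟨i, -, rfl⟩ := Finset.mem_image.1 hx
      exact Finset.mem_image.2 ⟨fo f i, Finset.mem_image_of_mem _ (mem_univ i), (hv i).symm⟩
    · intro x hx
      obtain ⟨p, hp, rfl⟩ := Finset.mem_image.1 hx
      exact Finset.mem_image_of_mem _ (mem_univ p)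
  have h2 : univ.image (fo f) = FOset f := by
    ext p
    constructor
    · intro hp
      obtain ⟨i, -, rfl⟩ := Finset.mem_image.1 hp
      simp [FOset, fo_idem]
    · intro hp
      rw [FOset, mem_filter] at hp
      exact Finset.mem_image.2 ⟨p, mem_univ p, hp.2⟩
  calc (univ.image v).card ≤ (univ.image (fo f)).card := by
        rw [h1]; exact Finset.card_image_le
  _ = k := by rw [h2, card_FOset, card_image_of_surj hs]

lemma fibers_eq_of_card {β : Type*} [DecidableEq β] {f : Fin n → Fin k}
    (hs : Function.Surjective f) (v : Fin n → β)
    (hconst : ∀ i j, f i = f j → v i = v j) (hcard : (univ.image v).card = k) :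
    ∀ i j, v i = v j → f i = f j := by
  set w : Fin k → β := fun t => v (Function.surjInv hs t) with hw'
  have hw : ∀ i, w (f i) = v i := fun i => hconst _ _ (Function.surjInv_eq hs (f i))
  have h2 : univ.image f = univ := Finset.eq_univ_of_forall fun b =>
    Finset.mem_image.2 ⟨Function.surjInv hs b, mem_univ _, Function.surjInv_eq hs b⟩
  have himg : univ.image v = univ.image w := by
    calc univ.image v = univ.image (w ∘ f) := by
          apply Finset.image_congr
          intro i _
          exact (hw i).symm
    _ = (univ.image f).image w := (Finset.image_image).symm
    _ = univ.image w := by rw [h2]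
  have hinj : Set.InjOn w ↑(univ : Finset (Fin k)) := by
    apply Finset.injOn_of_card_image_eq
    rw [← himg, hcard, card_univ, Fintype.card_fin]
  intro i j hvij
  have hww : w (f i) = w (f j) := by rw [hw, hw, hvij]
  exact hinj (Finset.mem_coe.2 (mem_univ _)) (Finset.mem_coe.2 (mem_univ _)) hww

lemma exists_canonFin {β : Type*} [DecidableEq β] (v : Fin n → β) (K : ℕ)
    (hK : (univ.image v).card = K) :
    ∃ g : Fin n → Fin K, g ∈ RGSset n K ∧ ∀ i j, g i = g j ↔ v i = v j := by
  have hlt : ∀ i, canon v i < K := fun i => by rw [← hK]; exact canon_lt v i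
  set g : Fin n → Fin K := fun i => ⟨canon v i, hlt i⟩ with hg
  have hfib : ∀ i j, g i = g j ↔ v i = v j := by
    intro i j
    rw [hg]
    constructor
    · intro hgg
      exact canon_inj (congrArg Fin.val hgg)
    · intro hvv
      exact Fin.ext (canon_eq_iff.2 hvv)
  refine ⟨g, ?_, hfib⟩
  rw [mem_RGSset]
  constructor
  · intro m
    have hm : (m : ℕ) < (univ.image v).card := by rw [hK]; exact m.2
    obtain ⟨i, hi⟩ := canon_surj v hm
    exact ⟨i, Fin.ext hi⟩
  · intro i
    have : canon g = canon v := canon_ext (fun a b => (hfib a b))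
    rw [this]

end Solve

end R2Aux

open R2Aux Finset

/-- There is a nonzero polynomial `R⁽²⁾` of total degree
`< e² (S₂(d+e−1,d−1) + S₂(d+e−1,d))` such that whenever `R⁽²⁾(α) ≠ 0`:
(a) the set `C_α` of monic original degree-`e` polynomials taking at most `d`
distinct values on `α` is finite with exactly `S₂(d+e−1,d)` elements;
(b) every `h ∈ C_α` takes exactly `d` distinct values on `α`;
(c) the coordinates of `α` are pairwise distinct. -/
theorem exists_genericity_poly_R2 {F : Type*} [Field F] [DecidableEq F]
    (d e : ℕ) (hd : 2 ≤ d) (he : 2 ≤ e) :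
    ∃ R : MvPolynomial (Fin (d + e - 1)) F,
      R ≠ 0 ∧
      R.totalDegree < e ^ 2 * (stirling2 (d + e - 1) (d - 1) + stirling2 (d + e - 1) d) ∧
      ∀ α : Fin (d + e - 1) → F, MvPolynomial.eval α R ≠ 0 →
        (let Cα : Set (Polynomial F) :=
          {h | h.Monic ∧ h.natDegree = e ∧ h.coeff 0 = 0 ∧
            (Finset.univ.image fun i => h.eval (α i)).card ≤ d}
        Cα.Finite ∧ Cα.ncard = stirling2 (d + e - 1) d ∧
          (∀ h ∈ Cα, (Finset.univ.image fun i => h.eval (α i)).card = d)) ∧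
        Function.Injective α := by
  classical
  obtain ⟨d', rfl⟩ : ∃ d', d = d' + 1 := ⟨d - 1, by omega⟩
  obtain ⟨e', rfl⟩ : ∃ e', e = e' + 1 := ⟨e - 1, by omega⟩
  have hd' : 1 ≤ d' := by omega
  have he' : 1 ≤ e' := by omega
  set N := d' + 1 + (e' + 1) - 1 with hN
  have hNval : N = d' + e' + 1 := by omega
  haveI : NeZero N := ⟨by omega⟩
  have hcard1 : ∀ f : Fin N → Fin (d' + 1), f ∈ RGSset N (d' + 1) → (NRset f).card = e' := by
    intro f hf
    rw [card_NRset (mem_RGSset.1 hf).1]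
    omega
  have hcard0 : ∀ g : Fin N → Fin d', g ∈ RGSset N d' → (NRset g).card = e' + 1 := by
    intro g hg
    rw [card_NRset (mem_RGSset.1 hg).1]
    omega
  refine ⟨vdm F N * (∏ f ∈ RGSset N (d' + 1), (genMat F e' f).det)
      * (∏ g ∈ RGSset N d', (genMat F (e' + 1) g).det), ?_, ?_, ?_⟩
  · exact mul_ne_zero (mul_ne_zero vdm_ne_zero
      (Finset.prod_ne_zero_iff.2 fun f hf => det_genMat_ne_zero (hcard1 f hf)))
      (Finset.prod_ne_zero_iff.2 fun g hg => det_genMat_ne_zero (hcard0 g hg))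
  · -- degree bound
    have h1 : (∏ f ∈ RGSset N (d' + 1), (genMat F e' f).det).totalDegree
        ≤ stirling2 N (d' + 1) * ∑ c : Fin e', ((c : ℕ) + 1) := by
      refine le_trans (MvPolynomial.totalDegree_finset_prod _ _) ?_
      calc ∑ f ∈ RGSset N (d' + 1), (genMat F e' f).det.totalDegree
          ≤ ∑ _f ∈ RGSset N (d' + 1), (∑ c : Fin e', ((c : ℕ) + 1)) :=
            Finset.sum_le_sum fun f _ => totalDegree_genMat_det f
      _ = (RGSset N (d' + 1)).card * ∑ c : Fin e', ((c : ℕ) + 1) := by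
            rw [Finset.sum_const, smul_eq_mul]
      _ = stirling2 N (d' + 1) * ∑ c : Fin e', ((c : ℕ) + 1) := by rw [card_RGSset]
    have h0 : (∏ g ∈ RGSset N d', (genMat F (e' + 1) g).det).totalDegree
        ≤ stirling2 N d' * ∑ c : Fin (e' + 1), ((c : ℕ) + 1) := by
      refine le_trans (MvPolynomial.totalDegree_finset_prod _ _) ?_
      calc ∑ g ∈ RGSset N d', (genMat F (e' + 1) g).det.totalDegree
          ≤ ∑ _g ∈ RGSset N d', (∑ c : Fin (e' + 1), ((c : ℕ) + 1)) :=
            Finset.sum_le_sum fun g _ => totalDegree_genMat_det g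
      _ = (RGSset N d').card * ∑ c : Fin (e' + 1), ((c : ℕ) + 1) := by
            rw [Finset.sum_const, smul_eq_mul]
      _ = stirling2 N d' * ∑ c : Fin (e' + 1), ((c : ℕ) + 1) := by rw [card_RGSset]
    have hmul : (vdm F N * (∏ f ∈ RGSset N (d' + 1), (genMat F e' f).det)
        * (∏ g ∈ RGSset N d', (genMat F (e' + 1) g).det)).totalDegree
        ≤ ((∑ c : Fin N, (c : ℕ)) + stirling2 N (d' + 1) * ∑ c : Fin e', ((c : ℕ) + 1))
          + stirling2 N d' * ∑ c : Fin (e' + 1), ((c : ℕ) + 1) :=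
      le_trans (MvPolynomial.totalDegree_mul _ _)
        (add_le_add (le_trans (MvPolynomial.totalDegree_mul _ _)
          (add_le_add totalDegree_vdm h1)) h0)
    refine lt_of_le_of_lt hmul ?_
    have hA : 2 * (∑ c : Fin N, (c : ℕ)) = N * (d' + e') := by
      rw [Fin.sum_univ_eq_sum_range (fun i => i) N]
      have h5 := Finset.sum_range_id_mul_two N
      have h6 : N - 1 = d' + e' := by omega
      rw [h6] at h5
      omega
    have hB : 2 * (∑ c : Fin e', ((c : ℕ) + 1)) = (e' + 1) * e' := by
      rw [Fin.sum_univ_eq_sum_range (fun i => i + 1) e']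
      have h4 : (∑ i ∈ Finset.range (e' + 1), i) = (∑ i ∈ Finset.range e', (i + 1)) + 0 :=
        Finset.sum_range_succ' (fun i => i) e'
      have h5 := Finset.sum_range_id_mul_two (e' + 1)
      rw [show e' + 1 - 1 = e' from rfl] at h5
      omega
    have hC : 2 * (∑ c : Fin (e' + 1), ((c : ℕ) + 1)) = (e' + 2) * (e' + 1) := by
      rw [Fin.sum_univ_eq_sum_range (fun i => i + 1) (e' + 1)]
      have h4 : (∑ i ∈ Finset.range (e' + 2), i) = (∑ i ∈ Finset.range (e' + 1), (i + 1)) + 0 :=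
        Finset.sum_range_succ' (fun i => i) (e' + 1)
      have h5 := Finset.sum_range_id_mul_two (e' + 2)
      rw [show e' + 2 - 1 = e' + 1 from rfl] at h5
      omega
    have hM := main_ineq d' e' hd' he'
    rw [← hNval] at hM
    have hd1 : d' + 1 - 1 = d' := by omega
    rw [hd1]
    set SA := ∑ c : Fin N, (c : ℕ)
    set SB := ∑ c : Fin e', ((c : ℕ) + 1)
    set SC := ∑ c : Fin (e' + 1), ((c : ℕ) + 1)
    set S1 := stirling2 N (d' + 1)
    set S0 := stirling2 N d'
    have e1 : 2 * (S1 * SB) = S1 * (e' * (e' + 1)) := by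
      rw [show (e' : ℕ) * (e' + 1) = (e' + 1) * e' from by ring, ← hB]; ring
    have e2 : 2 * (S0 * SC) = S0 * ((e' + 1) * (e' + 2)) := by
      rw [show ((e' : ℕ) + 1) * (e' + 2) = (e' + 2) * (e' + 1) from by ring, ← hC]; ring
    nlinarith [hM, hA, e1, e2]
  · -- the per-α statement
    intro α hα
    have hconv : ∀ (M k' : ℕ) (f : Fin N → Fin k'),
        MvPolynomial.eval α ((genMat F M f).det)
          = ((genMat F M f).map (MvPolynomial.eval α)).det :=
      fun M k' f => by rw [RingHom.map_det, RingHom.mapMatrix_apply]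
    rw [map_mul, map_mul, map_prod, map_prod] at hα
    have hvd : MvPolynomial.eval α (vdm F N) ≠ 0 := by
      intro h0; apply hα; rw [h0]; ring
    have hdet1 : ∀ f ∈ RGSset N (d' + 1),
        ((genMat F e' f).map (MvPolynomial.eval α)).det ≠ 0 := by
      intro f hf h0
      apply hα
      have hz : (∏ f ∈ RGSset N (d' + 1), MvPolynomial.eval α ((genMat F e' f).det)) = 0 :=
        Finset.prod_eq_zero hf (by rw [hconv, h0])
      rw [hz]
      ring
    have hdet0 : ∀ g ∈ RGSset N d',
        ((genMat F (e' + 1) g).map (MvPolynomial.eval α)).det ≠ 0 := by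
      intro g hg h0
      apply hα
      have hz : (∏ g ∈ RGSset N d', MvPolynomial.eval α ((genMat F (e' + 1) g).det)) = 0 :=
        Finset.prod_eq_zero hg (by rw [hconv, h0])
      rw [hz]
      ring
    have hinj : Function.Injective α := vdm_eval_injective α hvd
    have hsolve : ∀ f ∈ RGSset N (d' + 1), ∃ cv : Fin e' → F,
        (∀ i, (polyOf e' cv).eval (α i) = (polyOf e' cv).eval (α (fo f i)))
        ∧ ∀ cv' : Fin e' → F,
          (∀ i, (polyOf e' cv').eval (α i) = (polyOf e' cv').eval (α (fo f i))) → cv' = cv :=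
      fun f hf => solve_exists_unique f (hcard1 f hf) α (hdet1 f hf)
    choose sol hsol1 hsol2 using hsolve
    set S : Finset (Polynomial F) :=
      (RGSset N (d' + 1)).attach.image (fun fp => polyOf e' (sol fp.1 fp.2)) with hS
    have hK1 : ∀ (f) (hf : f ∈ RGSset N (d' + 1)), (polyOf e' (sol f hf)).Monic
        ∧ (polyOf e' (sol f hf)).natDegree = e' + 1 ∧ (polyOf e' (sol f hf)).coeff 0 = 0
        ∧ (univ.image fun i => (polyOf e' (sol f hf)).eval (α i)).card ≤ d' + 1 := by
      intro f hf
      refine ⟨polyOf_monic _, polyOf_natDegree _, polyOf_coeff_zero _, ?_⟩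
      exact card_image_le_of_fo (mem_RGSset.1 hf).1 _ (hsol1 f hf)
    have hK2 : ∀ h : Polynomial F, h.Monic → h.natDegree = e' + 1 → h.coeff 0 = 0 →
        (univ.image fun i => h.eval (α i)).card ≤ d' + 1 →
        (univ.image fun i => h.eval (α i)).card = d' + 1
        ∧ ∃ (f : Fin N → Fin (d' + 1)) (hf : f ∈ RGSset N (d' + 1)),
            h = polyOf e' (sol f hf) := by
      intro h hmon hdeg h0 hcle
      have hnf : h = polyOf e' (fun kk => h.coeff ((kk : ℕ) + 1)) := poly_eq_polyOf hmon hdeg h0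
      set c₀ : Fin e' → F := fun kk => h.coeff ((kk : ℕ) + 1) with hc₀
      set v : Fin N → F := fun i => h.eval (α i) with hv
      have hKd : (univ.image v).card = d' + 1 := by
        by_contra hKne
        have hKle : (univ.image v).card ≤ d' := by omega
        have himgc : (univ.image (canon v)).card = (univ.image v).card := by
          rw [image_canon, Finset.card_range]
        obtain ⟨w, hw1, hw2⟩ := refine_exists (d' - (univ.image v).card) (canon v) d'
          (by omega) (by omega)
        obtain ⟨g, hgmem, hgfib⟩ := exists_canonFin w d' hw1
        have hvg : ∀ i, v i = v (fo g i) := by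
          intro i
          have h1 : g (fo g i) = g i := fo_apply g i
          have h2 : w (fo g i) = w i := (hgfib _ _).1 h1
          have h3 : canon v (fo g i) = canon v i := hw2 _ _ h2
          exact (canon_inj h3).symm
        apply no_solve g (hcard0 g hgmem) α (hdet0 g hgmem) c₀
        intro i
        rw [← hnf]
        exact hvg i
      refine ⟨hKd, ?_⟩
      obtain ⟨f, hfmem, hffib⟩ := exists_canonFin v (d' + 1) hKd
      have hspec : ∀ i, (polyOf e' c₀).eval (α i) = (polyOf e' c₀).eval (α (fo f i)) := by
        intro i
        rw [← hnf]
        exact ((hffib _ _).1 (fo_apply f i)).symm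
      exact ⟨f, hfmem, by rw [hnf, hsol2 f hfmem c₀ hspec]⟩
    -- fibers of f are exactly value-fibers of its polynomial
    have hfib : ∀ (f : Fin N → Fin (d' + 1)) (hf : f ∈ RGSset N (d' + 1)) (i j : Fin N),
        f i = f j ↔ (polyOf e' (sol f hf)).eval (α i) = (polyOf e' (sol f hf)).eval (α j) := by
      intro f hf i j
      have hconst : ∀ a b, f a = f b →
          (polyOf e' (sol f hf)).eval (α a) = (polyOf e' (sol f hf)).eval (α b) := by
        intro a b hab
        rw [hsol1 f hf a, hsol1 f hf b, fo_congr hab]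
      constructor
      · exact hconst i j
      · intro hvv
        have h4 := hK1 f hf
        exact fibers_eq_of_card (mem_RGSset.1 hf).1 _ hconst
          (hK2 _ h4.1 h4.2.1 h4.2.2.1 h4.2.2.2).1 i j hvv
    have hCeq : {h : Polynomial F | h.Monic ∧ h.natDegree = e' + 1 ∧ h.coeff 0 = 0 ∧
        (univ.image fun i => h.eval (α i)).card ≤ d' + 1} = ↑S := by
      ext h
      constructor
      · rintro ⟨h1, h2, h3, h4⟩
        obtain ⟨-, f, hf, rfl⟩ := hK2 h h1 h2 h3 h4
        exact Finset.mem_coe.2 (Finset.mem_image.2 ⟨⟨f, hf⟩, Finset.mem_attach _ _, rfl⟩)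
      · intro hh
        obtain ⟨⟨f, hf⟩, -, rfl⟩ := Finset.mem_image.1 (Finset.mem_coe.1 hh)
        exact hK1 f hf
    have hScard : S.card = stirling2 N (d' + 1) := by
      rw [hS, Finset.card_image_of_injOn, Finset.card_attach, card_RGSset]
      intro fp _ gp _ heq
      obtain ⟨f, hf⟩ := fp
      obtain ⟨g, hg⟩ := gp
      dsimp only at heq
      apply Subtype.ext
      show f = g
      funext i
      apply Fin.ext
      rw [(mem_RGSset.1 hf).2 i, (mem_RGSset.1 hg).2 i]
      apply congrFun
      apply canon_ext
      intro a b
      rw [hfib f hf a b, hfib g hg a b, heq]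
    have hfin : ({h : Polynomial F | h.Monic ∧ h.natDegree = e' + 1 ∧ h.coeff 0 = 0 ∧
        (univ.image fun i => h.eval (α i)).card ≤ d' + 1} : Set (Polynomial F)).Finite := by
      rw [hCeq]; exact S.finite_toSet
    have hnc : ({h : Polynomial F | h.Monic ∧ h.natDegree = e' + 1 ∧ h.coeff 0 = 0 ∧
        (univ.image fun i => h.eval (α i)).card ≤ d' + 1} : Set (Polynomial F)).ncard
        = stirling2 N (d' + 1) := by
      rw [hCeq, Set.ncard_coe_finset, hScard]
    exact ⟨⟨hfin, hnc, fun h hh => (hK2 h hh.1 hh.2.1 hh.2.2.1 hh.2.2.2).1⟩, hinj⟩
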